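/- Let n, k be naturals with k < n - k, X = {1,…,n}, and let L_{k,n} be the bipartite graph with vertex set [X]^k ∪ [X]^{n-k} (the k-element and (n-k)-element subsets of X) and edges AB whenever A ∈ [X]^k, B ∈ [X]^{n-k}, and A ⊆ B. If A ∈ [X]^k and B ∈ [X]^{n-k} with |A ∩ B| = i, then the graph distance satisfies ‖AB‖ ≤ 2⌈(k - i)/(n - 2k)⌉ + 1. -/

import Mathlib

/-- Vertices of the level graph: k-element and (n-k)-element subsets of {1,…,n}. -/
def LevelVert (n k : ℕ) := {A : Finset (Fin n) // A.card = k ∨ A.card = n - k}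

/-- The (k,n)-level graph L_{k,n}. -/
def levelGraph (n k : ℕ) : SimpleGraph (LevelVert n k) where
  Adj A B := A ≠ B ∧
    ((A.1.card = k ∧ B.1.card = n - k ∧ A.1 ⊆ B.1) ∨
     (B.1.card = k ∧ A.1.card = n - k ∧ B.1 ⊆ A.1))
  symm := ⟨by intro A B h; exact ⟨Ne.symm h.1, h.2.elim Or.inr Or.inl⟩⟩
  loopless := ⟨by intro A h; exact h.1 rfl⟩

/-- The initial vertex P = {1,…,k} (as a subset of Fin n). -/
def Pset (n k : ℕ) : Finset (Fin n) := Finset.univ.filter (fun x => (x : ℕ) < k)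

/-- If `A ⊆ B`, they are adjacent, giving a walk of length 1. -/
lemma walk_of_subset {n k : ℕ} (hk : k < n - k) (A B : LevelVert n k)
    (hA : A.1.card = k) (hB : B.1.card = n - k) (hAB : A.1 ⊆ B.1) :
    ∃ w : (levelGraph n k).Walk A B, w.length ≤ 1 := by
  have hne : A ≠ B := by
    intro h
    rw [h] at hA
    omega
  exact ⟨SimpleGraph.Walk.cons ⟨hne, Or.inl ⟨hA, hB, hAB⟩⟩ SimpleGraph.Walk.nil, le_refl 1⟩

/-- Key induction: if `k - |A ∩ B| ≤ j·(n-2k)`, there is a walk of length ≤ `2j+1`. -/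
lemma walk_of_inter {n k : ℕ} (hk : k < n - k) (B : LevelVert n k) (hB : B.1.card = n - k) :
    ∀ j (A : LevelVert n k), A.1.card = k →
      k - (A.1 ∩ B.1).card ≤ j * (n - 2 * k) →
      ∃ w : (levelGraph n k).Walk A B, w.length ≤ 2 * j + 1 := by
  intro j
  induction j with
  | zero =>
    intro A hA hle
    have hsub : A.1 ∩ B.1 ⊆ A.1 := Finset.inter_subset_left
    have hAB : A.1 ⊆ B.1 := by
      have : A.1 ∩ B.1 = A.1 := Finset.eq_of_subset_of_card_le hsub (by omega)
      exact Finset.inter_eq_left.mp this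
    exact walk_of_subset hk A B hA hB hAB
  | succ j ih =>
    intro A hA hle
    by_cases hik : k ≤ (A.1 ∩ B.1).card
    · obtain ⟨w, hw⟩ := walk_of_subset hk A B hA hB (by
        have hsub : A.1 ∩ B.1 ⊆ A.1 := Finset.inter_subset_left
        have : A.1 ∩ B.1 = A.1 := Finset.eq_of_subset_of_card_le hsub (by omega)
        exact Finset.inter_eq_left.mp this)
      exact ⟨w, by omega⟩
    · set i := (A.1 ∩ B.1).card with hi
      set d := n - 2 * k with hd
      have hd0 : 0 < d := by omega
      have hiA : i ≤ k := by
        have := Finset.card_le_card (Finset.inter_subset_left : A.1 ∩ B.1 ⊆ A.1)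
        omega
      -- choose d elements of B \ A to add to A
      have hBAcard : d ≤ (B.1 \ A.1).card := by
        have h1 := Finset.card_inter_add_card_sdiff B.1 A.1
        have h2 : (B.1 ∩ A.1).card = i := by rw [Finset.inter_comm]
        omega
      obtain ⟨S, hSsub, hScard⟩ := Finset.exists_subset_card_eq hBAcard
      have hSdisj : Disjoint A.1 S := by
        rw [Finset.disjoint_left]
        intro x hxA hxS
        exact (Finset.mem_sdiff.mp (hSsub hxS)).2 hxA
      set C : Finset (Fin n) := A.1 ∪ S with hC
      have hCcard : C.card = n - k := by
        rw [hC, Finset.card_union_of_disjoint hSdisj]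
        omega
      set Cv : LevelVert n k := ⟨C, Or.inr hCcard⟩ with hCv
      have hACadj : (levelGraph n k).Adj A Cv := by
        refine ⟨?_, Or.inl ⟨hA, hCcard, Finset.subset_union_left⟩⟩
        intro h
        have : A.1 = C := congrArg Subtype.val h
        rw [this, hCcard] at hA
        omega
      -- C ∩ B is large
      have hCBcard : i + d ≤ (C ∩ B.1).card := by
        have hsub : (A.1 ∩ B.1) ∪ S ⊆ C ∩ B.1 := by
          intro x hx
          rcases Finset.mem_union.mp hx with hx | hx
          · exact Finset.mem_inter.mpr ⟨Finset.mem_union_left _ (Finset.mem_inter.mp hx).1,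
              (Finset.mem_inter.mp hx).2⟩
          · exact Finset.mem_inter.mpr ⟨Finset.mem_union_right _ hx,
              (Finset.mem_sdiff.mp (hSsub hx)).1⟩
        have hdisj2 : Disjoint (A.1 ∩ B.1) S :=
          Finset.disjoint_of_subset_left Finset.inter_subset_left hSdisj
        have := Finset.card_le_card hsub
        rw [Finset.card_union_of_disjoint hdisj2, hScard] at this
        omega
      -- choose a k-subset A' of C capturing as much of C ∩ B as possible
      have hstep : ∃ A' : Finset (Fin n), A' ⊆ C ∧ A'.card = k ∧
          min k (i + d) ≤ (A' ∩ B.1).card := by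
        by_cases hc : k ≤ (C ∩ B.1).card
        · obtain ⟨A', hsub, hcard⟩ := Finset.exists_subset_card_eq hc
          refine ⟨A', hsub.trans Finset.inter_subset_left, hcard, ?_⟩
          have : A' ⊆ B.1 := hsub.trans Finset.inter_subset_right
          rw [Finset.inter_eq_left.mpr this, hcard]
          omega
        · obtain ⟨A', h1, h2, h3⟩ := Finset.exists_subsuperset_card_eq (n := k)
            (Finset.inter_subset_left : C ∩ B.1 ⊆ C) (by omega) (by omega)
          refine ⟨A', h2, by omega, ?_⟩
          have hsub : C ∩ B.1 ⊆ A' ∩ B.1 :=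
            Finset.subset_inter h1 Finset.inter_subset_right
          have := Finset.card_le_card hsub
          omega
      obtain ⟨A', hA'C, hA'card, hA'B⟩ := hstep
      set A'v : LevelVert n k := ⟨A', Or.inl hA'card⟩ with hA'v
      have hCA'adj : (levelGraph n k).Adj Cv A'v := by
        refine ⟨?_, Or.inr ⟨hA'card, hCcard, hA'C⟩⟩
        intro h
        have : C = A' := congrArg Subtype.val h
        rw [← this, hCcard] at hA'card
        omega
      -- apply the induction hypothesis to A'
      have hle' : k - (A'v.1 ∩ B.1).card ≤ j * d := by
        have h := hle
        rw [Nat.succ_mul] at h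
        have hmin : min k (i + d) ≤ (A'v.1 ∩ B.1).card := hA'B
        generalize j * d = m at h ⊢
        omega
      obtain ⟨w, hw⟩ := ih A'v hA'card hle'
      exact ⟨SimpleGraph.Walk.cons hACadj (SimpleGraph.Walk.cons hCA'adj w), by
        simp only [SimpleGraph.Walk.length_cons]
        omega⟩

theorem dist_le_of_card_ne (n k i : ℕ) (hk : k < n - k)
    (A B : LevelVert n k) (hA : A.1.card = k) (hB : B.1.card = n - k)
    (hi : (A.1 ∩ B.1).card = i) :
    (levelGraph n k).dist A B ≤ 2 * ((k - i + (n - 2 * k) - 1) / (n - 2 * k)) + 1 := by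
  set j := (k - i + (n - 2 * k) - 1) / (n - 2 * k) with hj
  have hd0 : 0 < n - 2 * k := by omega
  have hkey : k - i ≤ j * (n - 2 * k) := by
    have h1 := Nat.div_add_mod (k - i + (n - 2 * k) - 1) (n - 2 * k)
    have h2 := Nat.mod_lt (k - i + (n - 2 * k) - 1) hd0
    rw [hj, Nat.mul_comm]
    generalize hX : (n - 2 * k) * ((k - i + (n - 2 * k) - 1) / (n - 2 * k)) = X at h1 ⊢
    generalize hR : (k - i + (n - 2 * k) - 1) % (n - 2 * k) = R at h1 h2
    omega
  obtain ⟨w, hw⟩ := walk_of_inter hk B hB j A hA (by rw [hi]; exact hkey)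
  calc (levelGraph n k).dist A B ≤ w.length := SimpleGraph.dist_le w
    _ ≤ 2 * j + 1 := hw
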